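/- arXiv:2211.10935 — 2 statements merged into one kernel-verified Lean document; each statement's English description precedes it below -/
import Mathlib

section
/- For n ≥ 1 and m ≥ 2, let G = T(2n+1, 2m) = C_{2m} □ C_{2n+1}, and let M be any perfect matching of G. Then there is a finite sequence of flips along facial squares transforming M into a perfect matching M' such that M' contains no horizontal edge between some pair of consecutive columns, i.e. M' ∩ E_i = ∅ for some i ∈ ℤ/2m, where E_i = {{(u_i,v_j),(u_{i+1},v_j)} : j ∈ ℤ/(2n+1)}. -/
open SimpleGraph

variable {V : Type*}

/-- `M` is a perfect matching of `G`, given as a set of edges: every vertex is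
incident with exactly one edge of `M`. -/
def IsPM (G : SimpleGraph V) (M : Set (Sym2 V)) : Prop :=
  M ⊆ G.edgeSet ∧ ∀ v : V, ∃! e, e ∈ M ∧ v ∈ e

/-- The set of endpoints of a set of edges. -/
def edgeVerts (C : Set (Sym2 V)) : Set V := {v | ∃ e ∈ C, v ∈ e}

/-- `C` is the edge set of a cycle of `G`: nonempty, every vertex it covers lies on
exactly two of its edges, and it is connected. -/
def IsCycleSet (G : SimpleGraph V) (C : Set (Sym2 V)) : Prop :=
  C ⊆ G.edgeSet ∧ C.Nonempty ∧
    (∀ v ∈ edgeVerts C, {e | e ∈ C ∧ v ∈ e}.ncard = 2) ∧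
    ((SimpleGraph.fromEdgeSet C).induce (edgeVerts C)).Connected

/-- `C` is an `M`-alternating cycle: a cycle whose edges lie alternately in the matching
`M` and outside of it; for a matching this is equivalent to every vertex of `C` being
covered by an edge of `C ∩ M`. -/
def IsAltCycle (G : SimpleGraph V) (M C : Set (Sym2 V)) : Prop :=
  IsCycleSet G C ∧ ∀ v ∈ edgeVerts C, ∃ e ∈ C ∩ M, v ∈ e

/-- `S` is a forcing set of the perfect matching `M`: `S ⊆ M` and `M` is the unique
perfect matching of `G` containing `S`. -/
def IsForcingSet (G : SimpleGraph V) (M S : Set (Sym2 V)) : Prop :=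
  S ⊆ M ∧ ∀ M' : Set (Sym2 V), IsPM G M' → S ⊆ M' → M' = M

/-- The forcing number `f(G,M)`: the minimum size of a forcing set of `M`. -/
noncomputable def forcingNumber (G : SimpleGraph V) (M : Set (Sym2 V)) : ℕ :=
  sInf {n | ∃ S : Set (Sym2 V), IsForcingSet G M S ∧ S.ncard = n}
/-- The toroidal grid `C_m □ C_n`: vertices `(i, j)` with `i ∈ ℤ/m`, `j ∈ ℤ/n`,
adjacent when they differ by one in exactly one coordinate. -/
def torus (m n : ℕ) : SimpleGraph (ZMod m × ZMod n) :=
  SimpleGraph.fromRel (fun x y => (x.1 = y.1 ∧ y.2 = x.2 + 1) ∨ (x.2 = y.2 ∧ y.1 = x.1 + 1))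

/-- The facial square of the torus with bottom-left corner `(i, j)`. -/
def facialSquare (m n : ℕ) (i : ZMod m) (j : ZMod n) : Set (Sym2 (ZMod m × ZMod n)) :=
  {s((i,j),(i+1,j)), s((i+1,j),(i+1,j+1)), s((i,j+1),(i+1,j+1)), s((i,j),(i,j+1))}

/-- The perfect matching `M₁` of `T(2n+1,2m)`: all horizontal edges leaving odd columns. -/
def horizOdd (m n : ℕ) : Set (Sym2 (ZMod (2*m) × ZMod (2*n+1))) :=
  {e | ∃ (i : ZMod (2*m)) (j : ZMod (2*n+1)), Odd i.val ∧ e = s((i,j),(i+1,j))}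

/-- The perfect matching `M₂` of `T(2n+1,2m)`: all horizontal edges leaving even columns. -/
def horizEven (m n : ℕ) : Set (Sym2 (ZMod (2*m) × ZMod (2*n+1))) :=
  {e | ∃ (i : ZMod (2*m)) (j : ZMod (2*n+1)), Even i.val ∧ e = s((i,j),(i+1,j))}

/-- One flip along a facial square: `M` and `M'` are perfect matchings of the torus whose
symmetric difference is a single facial square. -/
def TorusFlip (m n : ℕ) (M M' : Set (Sym2 (ZMod (2*m) × ZMod (2*n+1)))) : Prop :=
  IsPM (torus (2*m) (2*n+1)) M ∧ IsPM (torus (2*m) (2*n+1)) M' ∧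
    ∃ i j, symmDiff M M' = facialSquare (2*m) (2*n+1) i j

/-- The set `E_i` of horizontal edges between columns `i` and `i+1`. -/
def colEdges (m n : ℕ) (i : ZMod m) : Set (Sym2 (ZMod m × ZMod n)) :=
  {e | ∃ j : ZMod n, e = s((i,j),(i+1,j))}

section Aux

/-- horizontal edge between columns i,i+1 at row j -/
def hedg (a b : ℕ) (i : ZMod a) (j : ZMod b) : Sym2 (ZMod a × ZMod b) :=
  s((i,j),(i+1,j))

/-- vertical edge in column i between rows j,j+1 -/
def vedg (a b : ℕ) (i : ZMod a) (j : ZMod b) : Sym2 (ZMod a × ZMod b) :=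
  s((i,j),(i,j+1))

variable {a b : ℕ}

lemma zmod_cast_inj (hb : 3 ≤ b) {t t' : ℕ} (ht : t < b) (ht' : t' < b)
    (h : (t : ZMod b) = (t' : ZMod b)) : t = t' := by
  have h1 := ZMod.val_cast_of_lt ht
  have h2 := ZMod.val_cast_of_lt ht'
  have h3 : ((t : ZMod b)).val = ((t' : ZMod b)).val := by rw [h]
  omega

lemma zmod_add_cast_inj (hb : 3 ≤ b) (j : ZMod b) {t t' : ℕ} (ht : t < b) (ht' : t' < b)
    (h : j + (t : ZMod b) = j + (t' : ZMod b)) : t = t' :=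
  zmod_cast_inj hb ht ht' (by exact add_left_cancel h)

lemma zmod_add_ne (hb : 3 ≤ b) (j : ZMod b) {t t' : ℕ} (ht : t < b) (ht' : t' < b)
    (hne : t ≠ t') : j + (t : ZMod b) ≠ j + (t' : ZMod b) :=
  fun h => hne (zmod_add_cast_inj hb j ht ht' h)

lemma zmod_one_ne_zero (hb : 3 ≤ b) : (1 : ZMod b) ≠ 0 := by
  have : ((1:ℕ) : ZMod b) ≠ ((0:ℕ) : ZMod b) := fun h => by
    have := zmod_cast_inj hb (by omega) (by omega) h; omega
  simpa using this

lemma zmod_two_ne_zero (hb : 3 ≤ b) : (2 : ZMod b) ≠ 0 := by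
  have : ((2:ℕ) : ZMod b) ≠ ((0:ℕ) : ZMod b) := fun h => by
    have := zmod_cast_inj hb (by omega) (by omega) h; omega
  simpa using this

lemma zmod_succ_ne (hb : 3 ≤ b) (j : ZMod b) : j + 1 ≠ j := by
  intro h
  exact zmod_one_ne_zero hb (by linear_combination h - j)

lemma zmod_ne_succ (hb : 3 ≤ b) (j : ZMod b) : j ≠ j + 1 :=
  (zmod_succ_ne hb j).symm

lemma zmod_two_add_ne (hb : 3 ≤ b) (j : ZMod b) : j + 2 ≠ j := by
  intro h
  exact zmod_two_ne_zero hb (by linear_combination h - j)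

end Aux
section Edges

variable {a b : ℕ}

lemma hedg_eq_iff (ha : 3 ≤ a) {i i' : ZMod a} {j j' : ZMod b}
    (h : hedg a b i j = hedg a b i' j') : i = i' ∧ j = j' := by
  rw [hedg, hedg, Sym2.eq_iff] at h
  rcases h with ⟨h1, h2⟩ | ⟨h1, h2⟩
  · exact ⟨congrArg Prod.fst h1, congrArg Prod.snd h1⟩
  · exfalso
    have e1 : i = i' + 1 := congrArg Prod.fst h1
    have e2 : i + 1 = i' := congrArg Prod.fst h2
    exact zmod_two_ne_zero ha (by linear_combination e2 - e1)

lemma vedg_eq_iff (hb : 3 ≤ b) {i i' : ZMod a} {j j' : ZMod b}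
    (h : vedg a b i j = vedg a b i' j') : i = i' ∧ j = j' := by
  rw [vedg, vedg, Sym2.eq_iff] at h
  rcases h with ⟨h1, h2⟩ | ⟨h1, h2⟩
  · exact ⟨congrArg Prod.fst h1, congrArg Prod.snd h1⟩
  · exfalso
    have e1 : j = j' + 1 := congrArg Prod.snd h1
    have e2 : j + 1 = j' := congrArg Prod.snd h2
    exact zmod_two_ne_zero hb (by linear_combination e2 - e1)

lemma hedg_ne_vedg (ha : 3 ≤ a) (i i' : ZMod a) (j j' : ZMod b) :
    hedg a b i j ≠ vedg a b i' j' := by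
  intro h
  rw [hedg, vedg, Sym2.eq_iff] at h
  rcases h with ⟨h1, h2⟩ | ⟨h1, h2⟩
  · have e1 : i = i' := congrArg Prod.fst h1
    have e2 : i + 1 = i' := congrArg Prod.fst h2
    exact zmod_succ_ne ha i (e2.trans e1.symm)
  · have e1 : i = i' := congrArg Prod.fst h1
    have e2 : i + 1 = i' := congrArg Prod.fst h2
    exact zmod_succ_ne ha i (e2.trans e1.symm)

lemma mem_hedg_left (i : ZMod a) (j : ZMod b) : ((i,j) : ZMod a × ZMod b) ∈ hedg a b i j := by
  rw [hedg]; simp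

lemma mem_hedg_right (i : ZMod a) (j : ZMod b) : ((i+1,j) : ZMod a × ZMod b) ∈ hedg a b i j := by
  rw [hedg]; simp

lemma mem_vedg_left (i : ZMod a) (j : ZMod b) : ((i,j) : ZMod a × ZMod b) ∈ vedg a b i j := by
  rw [vedg]; simp

lemma mem_vedg_right (i : ZMod a) (j : ZMod b) : ((i,j+1) : ZMod a × ZMod b) ∈ vedg a b i j := by
  rw [vedg]; simp

lemma adj_hedg (ha : 3 ≤ a) (i : ZMod a) (j : ZMod b) :
    (torus a b).Adj (i,j) (i+1,j) := by
  rw [torus, SimpleGraph.fromRel_adj]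
  constructor
  · intro h
    exact zmod_succ_ne ha i (congrArg Prod.fst h).symm
  · left; right; exact ⟨rfl, rfl⟩

lemma adj_vedg (hb : 3 ≤ b) (i : ZMod a) (j : ZMod b) :
    (torus a b).Adj (i,j) (i,j+1) := by
  rw [torus, SimpleGraph.fromRel_adj]
  constructor
  · intro h
    exact zmod_succ_ne hb j (congrArg Prod.snd h).symm
  · left; left; exact ⟨rfl, rfl⟩

lemma hedg_mem_edgeSet (ha : 3 ≤ a) (i : ZMod a) (j : ZMod b) :
    hedg a b i j ∈ (torus a b).edgeSet := by
  rw [hedg, SimpleGraph.mem_edgeSet]; exact adj_hedg ha i j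

lemma vedg_mem_edgeSet (hb : 3 ≤ b) (i : ZMod a) (j : ZMod b) :
    vedg a b i j ∈ (torus a b).edgeSet := by
  rw [vedg, SimpleGraph.mem_edgeSet]; exact adj_vedg hb i j

/-- the four possible matching edges at a vertex -/
lemma edge_at_vertex (ha : 3 ≤ a) (hb : 3 ≤ b) {e : Sym2 (ZMod a × ZMod b)}
    (he : e ∈ (torus a b).edgeSet) {i : ZMod a} {j : ZMod b} (hv : (i,j) ∈ e) :
    e = hedg a b i j ∨ e = hedg a b (i-1) j ∨ e = vedg a b i j ∨ e = vedg a b i (j-1) := by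
  obtain ⟨w, rfl⟩ := Sym2.mem_iff_exists.mp hv
  rw [SimpleGraph.mem_edgeSet, torus, SimpleGraph.fromRel_adj] at he
  obtain ⟨hne, hrel⟩ := he
  rcases hrel with (⟨h1, h2⟩ | ⟨h1, h2⟩) | (⟨h1, h2⟩ | ⟨h1, h2⟩)
  · -- w = (i, j+1)
    have hw : w = (i, j+1) := Prod.ext h1.symm h2
    subst hw
    right; right; left; rfl
  · -- w = (i+1, j)
    have hw : w = (i+1, j) := Prod.ext h2 h1.symm
    subst hw
    left; rfl
  · -- w.1 = i, j = w.2 + 1 : w = (i, j-1)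
    have hw : w = (i, j-1) := Prod.ext h1 (by
      show w.2 = j - 1
      have h2' : j = w.2 + 1 := h2
      linear_combination - h2')
    subst hw
    right; right; right
    rw [vedg, sub_add_cancel]
    exact Sym2.eq_swap
  · -- w.2 = j, i = w.1 + 1 : w = (i-1, j)
    have hw : w = (i-1, j) := Prod.ext (by
      show w.1 = i - 1
      have h2' : i = w.1 + 1 := h2
      linear_combination - h2') h1
    subst hw
    right; left
    rw [hedg, sub_add_cancel]
    exact Sym2.eq_swap

end Edges
section Columns

variable {a b : ℕ}

/-- rows where there is a horizontal matching edge between columns g and g+1 -/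
def rungs (a b : ℕ) (M : Set (Sym2 (ZMod a × ZMod b))) (g : ZMod a) : Set (ZMod b) :=
  {j | hedg a b g j ∈ M}

/-- rows of column g that are horizontally matched -/
def colR (a b : ℕ) (M : Set (Sym2 (ZMod a × ZMod b))) (g : ZMod a) : Set (ZMod b) :=
  rungs a b M (g-1) ∪ rungs a b M g

lemma pm_unique {V : Type*} {G : SimpleGraph V} {M : Set (Sym2 V)} (hM : IsPM G M)
    {e e' : Sym2 V} (he : e ∈ M) (he' : e' ∈ M) {v : V} (hv : v ∈ e) (hv' : v ∈ e') :
    e = e' := by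
  obtain ⟨f, _, hu⟩ := hM.2 v
  rw [hu e ⟨he, hv⟩, hu e' ⟨he', hv'⟩]

lemma horiz_edge_of_colR {M : Set (Sym2 (ZMod a × ZMod b))} {g : ZMod a} {j : ZMod b}
    (hj : j ∈ colR a b M g) :
    ∃ i', hedg a b i' j ∈ M ∧ ((g,j) : ZMod a × ZMod b) ∈ hedg a b i' j := by
  rcases hj with h | h
  · exact ⟨g-1, h, by have := mem_hedg_right (a := a) (b := b) (g-1) j; rwa [sub_add_cancel] at this⟩
  · exact ⟨g, h, mem_hedg_left g j⟩

lemma vert_of_not_colR (ha : 3 ≤ a) (hb : 3 ≤ b) {M : Set (Sym2 (ZMod a × ZMod b))}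
    (hM : IsPM (torus a b) M) {g : ZMod a} {j : ZMod b} (hj : j ∉ colR a b M g) :
    vedg a b g j ∈ M ∨ vedg a b g (j-1) ∈ M := by
  obtain ⟨e, ⟨heM, hve⟩, _⟩ := hM.2 ((g,j) : ZMod a × ZMod b)
  rcases edge_at_vertex ha hb (hM.1 heM) hve with h | h | h | h
  · exact absurd (Or.inr (show hedg a b g j ∈ M by rw [← h]; exact heM)) hj
  · exact absurd (Or.inl (show hedg a b (g-1) j ∈ M by rw [← h]; exact heM)) hj
  · exact Or.inl (show vedg a b g j ∈ M by rw [← h]; exact heM)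
  · exact Or.inr (show vedg a b g (j-1) ∈ M by rw [← h]; exact heM)

lemma cast_succ_eq {b : ℕ} (t : ℕ) (ht : 1 ≤ t) : ((t : ℕ) : ZMod b) = ((t-1 : ℕ) : ZMod b) + 1 := by
  conv_lhs => rw [show t = (t-1)+1 from by omega]
  push_cast
  ring

/-- in a horizontally-unmatched stretch above a horizontally matched row, vertical
edges pair rows in aligned dominoes: at every odd offset there is a vertical edge. -/
lemma corridor (ha : 3 ≤ a) (hb : 3 ≤ b) {M : Set (Sym2 (ZMod a × ZMod b))}
    (hM : IsPM (torus a b) M) {g : ZMod a} {j : ZMod b} {d : ℕ} (hdb : d ≤ b)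
    (hj : j ∈ colR a b M g)
    (hbet : ∀ t : ℕ, 0 < t → t < d → (j + (t : ZMod b)) ∉ colR a b M g) :
    ∀ t : ℕ, t % 2 = 1 → t < d → vedg a b g (j + (t : ZMod b)) ∈ M := by
  intro t
  induction t using Nat.strong_induction_on with
  | _ t IH =>
    intro hodd htd
    have ht1 : 1 ≤ t := by omega
    have htb : t < b := by omega
    have hnot : (j + (t : ZMod b)) ∉ colR a b M g := hbet t (by omega) htd
    rcases vert_of_not_colR ha hb hM hnot with h | h
    · exact h
    · exfalso
      have hsub : (j + (t : ZMod b)) - 1 = j + ((t-1 : ℕ) : ZMod b) := by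
        rw [cast_succ_eq t ht1]; ring
      rw [hsub] at h
      rcases eq_or_lt_of_le ht1 with h1 | h1
      · -- t = 1 : vedg g j ∈ M but j is horizontally matched
        have : ((1:ℕ) - 1 : ℕ) = 0 := rfl
        rw [← h1] at h
        simp only [this, Nat.cast_zero, add_zero] at h
        obtain ⟨i', hi'M, hi'v⟩ := horiz_edge_of_colR hj
        have := pm_unique hM hi'M h hi'v (mem_vedg_left g j)
        exact hedg_ne_vedg ha i' g j j this
      · -- t ≥ 2 (t odd so t ≥ 3): IH at t-2 gives vedg g (j+(t-2)) ∈ M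
        have ht3 : 3 ≤ t := by omega
        have hIH := IH (t-2) (by omega) (by omega) (by omega)
        -- vedg g (j+(t-2)) contains (g, j+(t-1)); vedg g (j+(t-1)) contains it too
        have hmem1 : ((g, j + ((t-1:ℕ) : ZMod b)) : ZMod a × ZMod b) ∈ vedg a b g (j + ((t-2:ℕ) : ZMod b)) := by
          have : j + ((t-2:ℕ) : ZMod b) + 1 = j + ((t-1:ℕ) : ZMod b) := by
            rw [cast_succ_eq (t-1) (by omega)]
            have : t - 1 - 1 = t - 2 := by omega
            rw [this]; ring
          rw [← this]
          exact mem_vedg_right _ _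
        have hmem2 : ((g, j + ((t-1:ℕ) : ZMod b)) : ZMod a × ZMod b) ∈ vedg a b g (j + ((t-1:ℕ) : ZMod b)) :=
          mem_vedg_left _ _
        have heq := pm_unique hM hIH h hmem1 hmem2
        have := (vedg_eq_iff hb heq).2
        have := zmod_add_cast_inj hb j (by omega : t-2 < b) (by omega : t-1 < b) this
        omega

/-- consecutive horizontally-matched rows of a column are at odd distance -/
lemma dist_odd (ha : 3 ≤ a) (hb : 3 ≤ b) {M : Set (Sym2 (ZMod a × ZMod b))}
    (hM : IsPM (torus a b) M) {g : ZMod a} {j : ZMod b} {d : ℕ} (hd0 : 0 < d) (hdb : d ≤ b)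
    (hj : j ∈ colR a b M g) (hj' : j + (d : ZMod b) ∈ colR a b M g)
    (hbet : ∀ t : ℕ, 0 < t → t < d → (j + (t : ZMod b)) ∉ colR a b M g) :
    d % 2 = 1 := by
  by_contra hpar
  have hd1 : d - 1 < d := by omega
  have hodd : (d-1) % 2 = 1 := by omega
  have hv := corridor ha hb hM hdb hj hbet (d-1) hodd hd1
  -- vedg g (j+(d-1)) contains (g, j+d)
  have hmem : ((g, j + (d : ZMod b)) : ZMod a × ZMod b) ∈ vedg a b g (j + ((d-1:ℕ) : ZMod b)) := by
    have : j + ((d-1:ℕ) : ZMod b) + 1 = j + (d : ZMod b) := by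
      rw [cast_succ_eq d (by omega)]; ring
    rw [← this]
    exact mem_vedg_right _ _
  obtain ⟨i', hi'M, hi'v⟩ := horiz_edge_of_colR hj'
  have := pm_unique hM hi'M hv hi'v hmem
  exact hedg_ne_vedg ha i' g _ _ this

end Columns
section Flip

lemma flip_pm {V' : Type*} {G : SimpleGraph V'} {M : Set (Sym2 V')} (hM : IsPM G M)
    {A B C D : V'} (hab : s(A,B) ∈ M) (hcd : s(C,D) ∈ M)
    (hac : G.Adj A C) (hbd : G.Adj B D) (had : A ≠ D) (hbc : B ≠ C) :
    IsPM G (symmDiff M {s(A,B), s(C,D), s(A,C), s(B,D)}) := by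
  set S : Set (Sym2 V') := {s(A,B), s(C,D), s(A,C), s(B,D)} with hS
  have hadjAB : G.Adj A B := (SimpleGraph.mem_edgeSet _).mp (hM.1 hab)
  have hadjCD : G.Adj C D := (SimpleGraph.mem_edgeSet _).mp (hM.1 hcd)
  have hAB : A ≠ B := hadjAB.ne
  have hCD : C ≠ D := hadjCD.ne
  have hAC : A ≠ C := hac.ne
  have hBD : B ≠ D := hbd.ne
  have hScorner : ∀ e ∈ S, ∀ v ∈ e, v = A ∨ v = B ∨ v = C ∨ v = D := by
    intro e he v hv
    rcases he with rfl | rfl | rfl | rfl <;> rw [Sym2.mem_iff] at hv <;> tauto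
  have hACnM : s(A,C) ∉ M := by
    intro h
    have := pm_unique hM hab h (Sym2.mem_mk_left A B) (Sym2.mem_mk_left A C)
    rw [Sym2.eq_iff] at this
    tauto
  have hBDnM : s(B,D) ∉ M := by
    intro h
    have := pm_unique hM hab h (Sym2.mem_mk_right A B) (Sym2.mem_mk_left B D)
    rw [Sym2.eq_iff] at this
    tauto
  constructor
  · intro e he
    rw [Set.mem_symmDiff] at he
    rcases he with ⟨he, _⟩ | ⟨he, _⟩
    · exact hM.1 he
    · rcases he with rfl | rfl | rfl | rfl
      · exact hM.1 hab
      · exact hM.1 hcd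
      · exact (SimpleGraph.mem_edgeSet _).mpr hac
      · exact (SimpleGraph.mem_edgeSet _).mpr hbd
  · intro v
    by_cases hv : v = A ∨ v = B ∨ v = C ∨ v = D
    · -- corner vertices
      have key : ∀ (X Y : V'), v ∈ s(X,Y) → s(X,Y) ∈ S → s(X,Y) ∉ M →
          (∀ e' ∈ S, e' ∉ M → v ∈ e' → e' = s(X,Y)) →
          (∀ e' ∈ M, v ∈ e' → e' ∈ S) →
          ∃! e, e ∈ symmDiff M S ∧ v ∈ e := by
        intro X Y hvXY hXYS hXYnM huniqS hMS
        refine ⟨s(X,Y), ⟨Set.mem_symmDiff.mpr (Or.inr ⟨hXYS, hXYnM⟩), hvXY⟩, ?_⟩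
        rintro e' ⟨he', hve'⟩
        rw [Set.mem_symmDiff] at he'
        rcases he' with ⟨heM, heS⟩ | ⟨heS, henM⟩
        · exact absurd (hMS e' heM hve') heS
        · exact huniqS e' heS henM hve'
      -- the unique M-edge at each corner is the corresponding old edge
      have hMS : ∀ e' ∈ M, v ∈ e' → e' ∈ S := by
        intro e' he' hve'
        rcases hv with h | h | h | h
        · rw [h] at hve'
          rw [pm_unique hM he' hab hve' (Sym2.mem_mk_left A B)]; left; rfl
        · rw [h] at hve'
          rw [pm_unique hM he' hab hve' (Sym2.mem_mk_right A B)]; left; rfl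
        · rw [h] at hve'
          rw [pm_unique hM he' hcd hve' (Sym2.mem_mk_left C D)]; right; left; rfl
        · rw [h] at hve'
          rw [pm_unique hM he' hcd hve' (Sym2.mem_mk_right C D)]; right; left; rfl
      rcases hv with rfl | rfl | rfl | rfl
      · refine key v C (Sym2.mem_mk_left _ _) (by right; right; left; rfl) hACnM ?_ hMS
        rintro e' (rfl | rfl | rfl | rfl) hnM hve' <;>
          first
            | exact absurd hab hnM
            | exact absurd hcd hnM
            | rfl
            | (rw [Sym2.mem_iff] at hve'; exact absurd hve' (by push_neg; exact ⟨hAB, had⟩))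
      · refine key v D (Sym2.mem_mk_left _ _) (by right; right; right; rfl) hBDnM ?_ hMS
        rintro e' (rfl | rfl | rfl | rfl) hnM hve' <;>
          first
            | exact absurd hab hnM
            | exact absurd hcd hnM
            | rfl
            | (rw [Sym2.mem_iff] at hve'; exact absurd hve' (by push_neg; exact ⟨hAB.symm, hbc⟩))
      · refine key A v (Sym2.mem_mk_right _ _) (by right; right; left; rfl) hACnM ?_ hMS
        rintro e' (rfl | rfl | rfl | rfl) hnM hve' <;>
          first
            | exact absurd hab hnM
            | exact absurd hcd hnM
            | rfl
            | (rw [Sym2.mem_iff] at hve'; exact absurd hve' (by push_neg; exact ⟨hbc.symm, hCD⟩))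
      · refine key B v (Sym2.mem_mk_right _ _) (by right; right; right; rfl) hBDnM ?_ hMS
        rintro e' (rfl | rfl | rfl | rfl) hnM hve' <;>
          first
            | exact absurd hab hnM
            | exact absurd hcd hnM
            | rfl
            | (rw [Sym2.mem_iff] at hve'; exact absurd hve' (by push_neg; exact ⟨had.symm, hCD.symm⟩))
    · -- non-corner vertices keep their edge
      push_neg at hv
      obtain ⟨e, ⟨heM, hve⟩, hu⟩ := hM.2 v
      have heS : e ∉ S := fun h => by
        rcases hScorner e h v hve with h' | h' | h' | h' <;> tauto
      refine ⟨e, ⟨Set.mem_symmDiff.mpr (Or.inl ⟨heM, heS⟩), hve⟩, ?_⟩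
      rintro e' ⟨he', hve'⟩
      rw [Set.mem_symmDiff] at he'
      rcases he' with ⟨heM', _⟩ | ⟨heS', _⟩
      · exact hu e' ⟨heM', hve'⟩
      · rcases hScorner e' heS' v hve' with h' | h' | h' | h' <;> tauto

end Flip
section FlipInst

variable {a b : ℕ}

lemma square_eq_H (i : ZMod a) (j : ZMod b) :
    facialSquare a b i j =
      {s(((i,j) : ZMod a × ZMod b),(i+1,j)), s(((i,j+1) : ZMod a × ZMod b),(i+1,j+1)),
       s(((i,j) : ZMod a × ZMod b),(i,j+1)), s(((i+1,j) : ZMod a × ZMod b),(i+1,j+1))} := by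
  rw [facialSquare]
  ext e
  simp only [Set.mem_insert_iff, Set.mem_singleton_iff]
  tauto

lemma square_eq_V (i : ZMod a) (j : ZMod b) :
    facialSquare a b i j =
      {s(((i,j) : ZMod a × ZMod b),(i,j+1)), s(((i+1,j) : ZMod a × ZMod b),(i+1,j+1)),
       s(((i,j) : ZMod a × ZMod b),(i+1,j)), s(((i,j+1) : ZMod a × ZMod b),(i+1,j+1))} := by
  rw [facialSquare]
  ext e
  simp only [Set.mem_insert_iff, Set.mem_singleton_iff]
  tauto

/-- flipping a pair of horizontal edges in rows j, j+1 of gap i -/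
lemma flipH (ha : 3 ≤ a) (hb : 3 ≤ b) {M : Set (Sym2 (ZMod a × ZMod b))}
    (hM : IsPM (torus a b) M) {i : ZMod a} {j : ZMod b}
    (h1 : hedg a b i j ∈ M) (h2 : hedg a b i (j+1) ∈ M) :
    IsPM (torus a b) (symmDiff M (facialSquare a b i j)) := by
  rw [square_eq_H]
  refine flip_pm hM h1 h2 (adj_vedg hb i j) (adj_vedg hb (i+1) j) ?_ ?_
  · intro h; exact zmod_succ_ne ha i (congrArg Prod.fst h).symm
  · intro h; exact zmod_succ_ne ha i (congrArg Prod.fst h)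

/-- flipping a pair of vertical edges in columns i, i+1 starting at row j -/
lemma flipV (ha : 3 ≤ a) (hb : 3 ≤ b) {M : Set (Sym2 (ZMod a × ZMod b))}
    (hM : IsPM (torus a b) M) {i : ZMod a} {j : ZMod b}
    (h1 : vedg a b i j ∈ M) (h2 : vedg a b (i+1) j ∈ M) :
    IsPM (torus a b) (symmDiff M (facialSquare a b i j)) := by
  rw [square_eq_V]
  refine flip_pm hM h1 h2 (adj_hedg ha i j) (adj_hedg ha i (j+1)) ?_ ?_
  · intro h; exact zmod_succ_ne hb j (congrArg Prod.snd h).symm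
  · intro h; exact zmod_succ_ne hb j (congrArg Prod.snd h)

/-- the set of horizontal edges -/
def Horiz (a b : ℕ) : Set (Sym2 (ZMod a × ZMod b)) := {e | ∃ i j, e = hedg a b i j}

def HE (a b : ℕ) (M : Set (Sym2 (ZMod a × ZMod b))) : Set (Sym2 (ZMod a × ZMod b)) :=
  M ∩ Horiz a b

lemma hedg_mem_Horiz (i : ZMod a) (j : ZMod b) : hedg a b i j ∈ Horiz a b := ⟨i, j, rfl⟩

lemma vedg_not_Horiz (ha : 3 ≤ a) (i : ZMod a) (j : ZMod b) : vedg a b i j ∉ Horiz a b := by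
  rintro ⟨i', j', h⟩
  exact hedg_ne_vedg ha i' i j' j h.symm

lemma HE_flipH (ha : 3 ≤ a) {M : Set (Sym2 (ZMod a × ZMod b))}
    (h1 : hedg a b i j ∈ M) (h2 : hedg a b i (j+1) ∈ M) :
    HE a b (symmDiff M (facialSquare a b i j)) = HE a b M \ {hedg a b i j, hedg a b i (j+1)} := by
  have hsq : ∀ e ∈ facialSquare a b i j, e ∈ Horiz a b → e = hedg a b i j ∨ e = hedg a b i (j+1) := by
    rintro e (rfl | rfl | rfl | rfl) he
    · left; rfl
    · exact absurd he (vedg_not_Horiz ha (i+1) j)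
    · right; rfl
    · exact absurd he (vedg_not_Horiz ha i j)
  ext e
  simp only [HE, Set.mem_inter_iff, Set.mem_diff, Set.mem_symmDiff,
    Set.mem_insert_iff, Set.mem_singleton_iff]
  constructor
  · rintro ⟨hm | hm, hh⟩
    · refine ⟨⟨hm.1, hh⟩, ?_⟩
      rintro (rfl | rfl)
      · exact hm.2 (by left; rfl)
      · exact hm.2 (by right; right; left; rfl)
    · rcases hsq e hm.1 hh with rfl | rfl
      · exact absurd h1 hm.2
      · exact absurd h2 hm.2
  · rintro ⟨⟨hmM, hh⟩, hne⟩
    refine ⟨Or.inl ⟨hmM, ?_⟩, hh⟩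
    intro hmem
    rcases hsq e hmem hh with rfl | rfl <;> tauto

lemma HE_flipV (ha : 3 ≤ a) {M : Set (Sym2 (ZMod a × ZMod b))}
    (h1 : vedg a b i j ∈ M) (h2 : vedg a b (i+1) j ∈ M)
    (h3 : hedg a b i j ∉ M) (h4 : hedg a b i (j+1) ∉ M) :
    HE a b (symmDiff M (facialSquare a b i j)) = HE a b M ∪ {hedg a b i j, hedg a b i (j+1)} := by
  ext e
  simp only [HE, Set.mem_inter_iff, Set.mem_union, Set.mem_symmDiff,
    Set.mem_insert_iff, Set.mem_singleton_iff]
  constructor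
  · rintro ⟨hm | hm, hh⟩
    · exact Or.inl ⟨hm.1, hh⟩
    · rcases hm.1 with rfl | rfl | rfl | rfl
      · exact Or.inr (Or.inl rfl)
      · exact absurd hh (vedg_not_Horiz ha (i+1) j)
      · exact Or.inr (Or.inr rfl)
      · exact absurd hh (vedg_not_Horiz ha i j)
  · rintro (⟨hmM, hh⟩ | h | h)
    · refine ⟨Or.inl ⟨hmM, ?_⟩, hh⟩
      rintro (rfl | rfl | rfl | rfl)
      · exact h3 hmM
      · exact vedg_not_Horiz ha (i+1) j hh
      · exact h4 hmM
      · exact vedg_not_Horiz ha i j hh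
    · subst h; exact ⟨Or.inr ⟨by left; rfl, h3⟩, hedg_mem_Horiz i j⟩
    · subst h; exact ⟨Or.inr ⟨by right; right; left; rfl, h4⟩, hedg_mem_Horiz i (j+1)⟩

end FlipInst
section Parity

lemma even_card_invol {α : Type*} [DecidableEq α] :
    ∀ (k : ℕ) (s : Finset α), s.card = k → ∀ f : α → α,
      (∀ x ∈ s, f x ∈ s ∧ f (f x) = x ∧ f x ≠ x) → Even k := by
  intro k
  induction k using Nat.strong_induction_on with
  | _ k IH =>
    intro s hcard f hf
    rcases s.eq_empty_or_nonempty with rfl | ⟨x, hx⟩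
    · simp at hcard; simp [← hcard]
    · obtain ⟨hfx, hffx, hne⟩ := hf x hx
      have hfxe : f x ∈ s.erase x := Finset.mem_erase.mpr ⟨hne, hfx⟩
      set s' := (s.erase x).erase (f x) with hs'
      have hcx : (s.erase x).card = s.card - 1 := Finset.card_erase_of_mem hx
      have hcard' : s'.card = k - 2 := by
        rw [hs', Finset.card_erase_of_mem hfxe, hcx, hcard]
        omega
      have hk2 : 2 ≤ k := by
        have h1 : 0 < (s.erase x).card := Finset.card_pos.mpr ⟨f x, hfxe⟩
        omega
      have hE : Even (k - 2) := by
        refine IH (k-2) (by omega) s' hcard' f ?_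
        intro y hy
        rw [hs', Finset.mem_erase, Finset.mem_erase] at hy
        obtain ⟨hyfx, hyx, hys⟩ := hy
        obtain ⟨h1, h2, h3⟩ := hf y hys
        refine ⟨?_, h2, h3⟩
        rw [hs', Finset.mem_erase, Finset.mem_erase]
        refine ⟨?_, ?_, h1⟩
        · intro h
          apply hyx
          rw [← h2, h, hffx]
        · intro h
          apply hyfx
          rw [← h2, h]
      obtain ⟨t, ht⟩ := hE
      exact ⟨t + 1, by omega⟩

variable {a b : ℕ}

/-- each column has an odd number of horizontally matched rows -/
lemma colR_card_odd (ha : 3 ≤ a) (hb : 3 ≤ b) (hbodd : Odd b)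
    {M : Set (Sym2 (ZMod a × ZMod b))} (hM : IsPM (torus a b) M) (g : ZMod a) :
    Odd ((colR a b M g).ncard) := by
  haveI : NeZero b := ⟨by omega⟩
  classical
  set R := (colR a b M g).toFinite.toFinset with hR
  rw [Set.ncard_eq_toFinset_card (colR a b M g) (colR a b M g).toFinite]
  have hmemR : ∀ r, r ∈ R ↔ r ∈ colR a b M g := fun r => Set.Finite.mem_toFinset _
  set C := Rᶜ with hC
  have hmemC : ∀ r, r ∈ C ↔ r ∉ colR a b M g := by
    intro r; rw [hC, Finset.mem_compl, hmemR]
  set f : ZMod b → ZMod b := fun r => if vedg a b g r ∈ M then r + 1 else r - 1 with hfdef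
  have hf : ∀ r ∈ C, f r ∈ C ∧ f (f r) = r ∧ f r ≠ r := by
    intro r hr
    rw [hmemC] at hr
    rcases vert_of_not_colR ha hb hM hr with hup | hdown
    · have hfr : f r = r + 1 := by rw [hfdef]; simp [hup]
      have hnext : r + 1 ∉ colR a b M g := by
        intro hmem
        obtain ⟨i', hi'M, hi'v⟩ := horiz_edge_of_colR hmem
        exact hedg_ne_vedg ha i' g (r+1) r (pm_unique hM hi'M hup hi'v (mem_vedg_right g r))
      have hnotup : vedg a b g (r+1) ∉ M := by
        intro hmem
        have := pm_unique hM hmem hup (mem_vedg_left g (r+1)) (mem_vedg_right g r)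
        exact zmod_succ_ne hb r ((vedg_eq_iff hb this).2)
      refine ⟨by rw [hfr, hmemC]; exact hnext, ?_, by rw [hfr]; exact zmod_succ_ne hb r⟩
      rw [hfr, hfdef]
      simp only [hnotup, if_false]
      ring
    · have hcond : vedg a b g r ∉ M := by
        intro hmem
        have := pm_unique hM hmem hdown (mem_vedg_left g r)
          (by have := mem_vedg_right (a := a) g (r-1); rwa [sub_add_cancel] at this)
        have h2 := (vedg_eq_iff hb this).2
        exact zmod_one_ne_zero hb (by linear_combination h2)
      have hfr : f r = r - 1 := by rw [hfdef]; simp [hcond]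
      have hprev : r - 1 ∉ colR a b M g := by
        intro hmem
        obtain ⟨i', hi'M, hi'v⟩ := horiz_edge_of_colR hmem
        exact hedg_ne_vedg ha i' g (r-1) (r-1)
          (pm_unique hM hi'M hdown hi'v (mem_vedg_left g (r-1)))
      have hupprev : vedg a b g (r-1) ∈ M := hdown
      refine ⟨by rw [hfr, hmemC]; exact hprev, ?_, ?_⟩
      · rw [hfr, hfdef]
        simp only [hupprev, if_true]
        ring
      · rw [hfr]
        intro h
        exact zmod_one_ne_zero hb (by linear_combination - h)
  have hevenC : Even C.card := even_card_invol C.card C rfl f hf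
  set p := R.card with hp
  set q := C.card with hq
  have hcompl : q = b - p := by
    rw [hq, hC, Finset.card_compl, ZMod.card, hp]
  have hle : p ≤ b := by
    have := Finset.card_le_card (Finset.subset_univ R)
    rwa [Finset.card_univ, ZMod.card] at this
  obtain ⟨c, hc⟩ := hevenC
  obtain ⟨d, hd⟩ := hbodd
  exact ⟨d - c, by omega⟩

end Parity
section NextOff

open Classical in
/-- distance to the next element of `R` strictly above `j` (cyclically), as a natural
number in `[1, b]`. -/
noncomputable def nextOff (b : ℕ) (R : Set (ZMod b)) (j : ZMod b) : ℕ :=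
  if h : ∃ t : ℕ, 0 < t ∧ j + (t : ZMod b) ∈ R then Nat.find h else 0

variable {a b : ℕ}

lemma nextOff_exists (hb : 3 ≤ b) {R : Set (ZMod b)} {j : ZMod b} (hj : j ∈ R) :
    ∃ t : ℕ, 0 < t ∧ j + (t : ZMod b) ∈ R := by
  refine ⟨b, by omega, ?_⟩
  rw [ZMod.natCast_self, add_zero]
  exact hj

lemma nextOff_spec (hb : 3 ≤ b) {R : Set (ZMod b)} {j : ZMod b} (hj : j ∈ R) :
    0 < nextOff b R j ∧ j + ((nextOff b R j : ℕ) : ZMod b) ∈ R := by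
  classical
  rw [nextOff, dif_pos (nextOff_exists hb hj)]
  exact Nat.find_spec (nextOff_exists hb hj)

lemma nextOff_min (hb : 3 ≤ b) {R : Set (ZMod b)} {j : ZMod b} (hj : j ∈ R)
    {t : ℕ} (h0 : 0 < t) (ht : t < nextOff b R j) : j + (t : ZMod b) ∉ R := by
  classical
  rw [nextOff, dif_pos (nextOff_exists hb hj)] at ht
  intro hmem
  exact Nat.find_min (nextOff_exists hb hj) ht ⟨h0, hmem⟩

lemma nextOff_le (hb : 3 ≤ b) {R : Set (ZMod b)} {j : ZMod b} (hj : j ∈ R)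
    {t : ℕ} (h0 : 0 < t) (ht : j + (t : ZMod b) ∈ R) : nextOff b R j ≤ t := by
  classical
  rw [nextOff, dif_pos (nextOff_exists hb hj)]
  exact Nat.find_le ⟨h0, ht⟩

lemma nextOff_lt_of_two (hb : 3 ≤ b) {R : Set (ZMod b)} {j r : ZMod b} (hj : j ∈ R)
    (hr : r ∈ R) (hne : r ≠ j) : nextOff b R j < b := by
  haveI : NeZero b := ⟨by omega⟩
  have hv : ((r - j).val : ZMod b) = r - j := ZMod.natCast_rightInverse (r - j)
  have h0 : 0 < (r - j).val := by
    rcases Nat.eq_zero_or_pos (r - j).val with h | h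
    · exfalso; apply hne; have := (ZMod.val_eq_zero _).mp h; linear_combination this
    · exact h
  have hmem : j + (((r - j).val : ℕ) : ZMod b) ∈ R := by
    rw [hv]; simpa using hr
  have hle := nextOff_le hb hj h0 hmem
  have hlt : (r - j).val < b := ZMod.val_lt _
  omega

/-- successor is injective (two elements with equal successor coincide) -/
lemma nextOff_inj (hb : 3 ≤ b) {R : Set (ZMod b)} {j₁ j₂ : ZMod b} (h₁ : j₁ ∈ R) (h₂ : j₂ ∈ R)
    (heq : j₁ + ((nextOff b R j₁ : ℕ) : ZMod b) = j₂ + ((nextOff b R j₂ : ℕ) : ZMod b)) :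
    j₁ = j₂ := by
  set s₁ := nextOff b R j₁ with hs₁
  set s₂ := nextOff b R j₂ with hs₂
  have key : ∀ (x y : ZMod b) (u v : ℕ), x ∈ R → y ∈ R →
      u = nextOff b R x → v = nextOff b R y →
      x + (u : ZMod b) = y + (v : ZMod b) → u ≤ v → x = y := by
    intro x y u v hx hy hu hv heq' hle
    rcases Nat.eq_or_lt_of_le hle with rfl | hlt
    · exact add_right_cancel heq'
    · exfalso
      have hmem : y + ((v - u : ℕ) : ZMod b) ∈ R := by
        have : ((v - u : ℕ) : ZMod b) = (v : ZMod b) - (u : ZMod b) := by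
          push_cast [Nat.cast_sub (le_of_lt hlt)]; ring
        rw [this]
        have : y + ((v : ZMod b) - (u : ZMod b)) = x := by
          have := heq'.symm
          linear_combination this
        rw [this]; exact hx
      have h0u : 0 < u := by rw [hu]; exact (nextOff_spec hb hx).1
      exact nextOff_min hb hy (by omega) (by omega) hmem
  rcases le_total s₁ s₂ with hle | hle
  · exact key j₁ j₂ s₁ s₂ h₁ h₂ hs₁ hs₂ heq hle
  · exact (key j₂ j₁ s₂ s₁ h₂ h₁ hs₂ hs₁ heq.symm hle).symm

end NextOff

section Disjoint

variable {a b : ℕ}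

lemma rungs_disjoint (ha : 3 ≤ a) {M : Set (Sym2 (ZMod a × ZMod b))}
    (hM : IsPM (torus a b) M) (g : ZMod a) {j : ZMod b}
    (h1 : j ∈ rungs a b M g) (h2 : j ∈ rungs a b M (g+1)) : False := by
  have hm1 : ((g+1, j) : ZMod a × ZMod b) ∈ hedg a b g j := mem_hedg_right g j
  have hm2 : ((g+1, j) : ZMod a × ZMod b) ∈ hedg a b (g+1) j := mem_hedg_left (g+1) j
  have := pm_unique hM h1 h2 hm1 hm2
  have := (hedg_eq_iff ha this).1
  exact zmod_succ_ne ha g this.symm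

/-- in the union of two adjacent rung-sets, two cyclically consecutive elements
with the same label give a "seed" pair for the descent -/
lemma pair_exists (ha : 3 ≤ a) (hb : 3 ≤ b) (hbodd : Odd b)
    {M : Set (Sym2 (ZMod a × ZMod b))} (hM : IsPM (torus a b) M)
    (hne : ∀ g : ZMod a, (rungs a b M g).Nonempty) :
    ∃ (g : ZMod a) (j : ZMod b) (s : ℕ), 0 < s ∧ s < b ∧
      j ∈ rungs a b M g ∧ j + (s : ZMod b) ∈ rungs a b M g ∧
      (∀ t : ℕ, 0 < t → t < s → j + (t : ZMod b) ∉ rungs a b M g) ∧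
      ((∀ t : ℕ, 0 < t → t < s → j + (t : ZMod b) ∉ rungs a b M (g-1)) ∨
       (∀ t : ℕ, 0 < t → t < s → j + (t : ZMod b) ∉ rungs a b M (g+1))) := by
  haveI : NeZero b := ⟨by omega⟩
  by_contra hcon
  push_neg at hcon
  -- then every column alternates, contradicting odd cardinality
  set g₀ : ZMod a := 0 with hg₀
  set R : Set (ZMod b) := colR a b M g₀ with hR
  have hsub1 : rungs a b M (g₀-1) ⊆ R := fun r hr => Or.inl hr
  have hsub2 : rungs a b M g₀ ⊆ R := fun r hr => Or.inr hr
  have hdisj : ∀ j, j ∈ rungs a b M (g₀-1) → j ∈ rungs a b M g₀ → False := by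
    intro j hj1 hj2
    have : g₀ - 1 + 1 = g₀ := by ring
    exact rungs_disjoint ha hM (g₀-1) hj1 (by rw [this]; exact hj2)
  -- nonemptiness gives s < b for all successors
  have hslt : ∀ j ∈ R, nextOff b R j < b := by
    intro j hj
    obtain ⟨r1, hr1⟩ := hne (g₀ - 1)
    obtain ⟨r2, hr2⟩ := hne g₀
    by_cases h : r1 = j
    · refine nextOff_lt_of_two hb hj (hsub2 hr2) ?_
      intro he; subst he; exact hdisj r2 (h ▸ hr1) hr2
    · exact nextOff_lt_of_two hb hj (hsub1 hr1) h
  -- seed pair: both labels equal fails, so succ alternates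
  have halt : ∀ j ∈ R, (j ∈ rungs a b M (g₀-1) → j + ((nextOff b R j : ℕ) : ZMod b) ∈ rungs a b M g₀) ∧
      (j ∈ rungs a b M g₀ → j + ((nextOff b R j : ℕ) : ZMod b) ∈ rungs a b M (g₀-1)) := by
    intro j hj
    obtain ⟨hpos, hmem⟩ := nextOff_spec hb hj
    have hminR := fun t h0 ht => nextOff_min hb hj (t := t) h0 ht
    constructor
    · intro hjA
      rcases hmem with hB | hB
      · -- both in rungs (g₀ - 1) : contradiction with hcon at gap g₀-1
        exfalso
        have hc := hcon (g₀ - 1) j (nextOff b R j) hpos (hslt j hj) hjA hB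
          (fun t h0 ht hm => hminR t h0 ht (hsub1 hm))
        obtain ⟨-, ⟨t, h0t, hts, hmem'⟩⟩ := hc
        have he : g₀ - 1 + 1 = g₀ := by ring
        rw [he] at hmem'
        exact hminR t h0t hts (hsub2 hmem')
      · exact hB
    · intro hjB
      rcases hmem with hA | hA
      · exact hA
      · -- both in rungs g₀ : contradiction with hcon at gap g₀
        exfalso
        have hc := hcon g₀ j (nextOff b R j) hpos (hslt j hj) hjB hA
          (fun t h0 ht hm => hminR t h0 ht (hsub2 hm))
        obtain ⟨⟨t, h0t, hts, hmem'⟩, -⟩ := hc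
        exact hminR t h0t hts (hsub1 hmem')
  -- cardinalities
  classical
  set Afin := (rungs a b M (g₀-1)).toFinite.toFinset with hAfin
  set Bfin := (rungs a b M g₀).toFinite.toFinset with hBfin
  set Rfin := (colR a b M g₀).toFinite.toFinset with hRfin
  have hmemA : ∀ r, r ∈ Afin ↔ r ∈ rungs a b M (g₀-1) := fun r => Set.Finite.mem_toFinset _
  have hmemB : ∀ r, r ∈ Bfin ↔ r ∈ rungs a b M g₀ := fun r => Set.Finite.mem_toFinset _
  have hmemR : ∀ r, r ∈ Rfin ↔ r ∈ R := fun r => Set.Finite.mem_toFinset _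
  have hRun : Rfin = Afin ∪ Bfin := by
    ext r
    rw [hmemR, Finset.mem_union, hmemA, hmemB]
    exact Iff.rfl
  have hdisjf : Disjoint Afin Bfin := by
    rw [Finset.disjoint_left]
    intro r h1 h2
    exact hdisj r ((hmemA r).mp h1) ((hmemB r).mp h2)
  set f : ZMod b → ZMod b := fun j => j + ((nextOff b R j : ℕ) : ZMod b) with hf
  have hABle : Afin.card ≤ Bfin.card := by
    refine Finset.card_le_card_of_injOn f ?_ ?_
    · intro x hx
      rw [Finset.mem_coe, hmemA] at hx
      rw [Finset.mem_coe, hmemB]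
      exact (halt x (hsub1 hx)).1 hx
    · intro x hx y hy hxy
      rw [Finset.mem_coe, hmemA] at hx hy
      exact nextOff_inj hb (hsub1 hx) (hsub1 hy) hxy
  have hBAle : Bfin.card ≤ Afin.card := by
    refine Finset.card_le_card_of_injOn f ?_ ?_
    · intro x hx
      rw [Finset.mem_coe, hmemB] at hx
      rw [Finset.mem_coe, hmemA]
      exact (halt x (hsub2 hx)).2 hx
    · intro x hx y hy hxy
      rw [Finset.mem_coe, hmemB] at hx hy
      exact nextOff_inj hb (hsub2 hx) (hsub2 hy) hxy
  have heq : Afin.card = Bfin.card := le_antisymm hABle hBAle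
  have hodd := colR_card_odd ha hb hbodd hM g₀
  rw [Set.ncard_eq_toFinset_card (colR a b M g₀) (colR a b M g₀).toFinite] at hodd
  rw [show (colR a b M g₀).toFinite.toFinset = Rfin from rfl, hRun,
    Finset.card_union_of_disjoint hdisjf, heq] at hodd
  obtain ⟨d, hd⟩ := hodd
  omega
end Disjoint
section Descent

variable {a b : ℕ}

/-- The descent: from a pair of consecutive rungs of gap `g` with one adjacent gap
absent from the interior, we find a pair of consecutive rungs of some gap whose
interior is free of all three neighboring rung sets ("clear arc"). -/
lemma descent (ha : 3 ≤ a) (hb : 3 ≤ b) {M : Set (Sym2 (ZMod a × ZMod b))}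
    (hM : IsPM (torus a b) M) (ε : ZMod a) (hε : ε = 1 ∨ ε = -1) :
    ∀ s : ℕ, ∀ g : ZMod a, ∀ j : ZMod b,
      0 < s → s < b → j ∈ rungs a b M g → j + (s : ZMod b) ∈ rungs a b M g →
      (∀ t : ℕ, 0 < t → t < s → j + (t : ZMod b) ∉ rungs a b M g) →
      (∀ t : ℕ, 0 < t → t < s → j + (t : ZMod b) ∉ rungs a b M (g + ε)) →
      ∃ (g' : ZMod a) (j' : ZMod b) (s' : ℕ), 0 < s' ∧ s' < b ∧
        j' ∈ rungs a b M g' ∧ j' + (s' : ZMod b) ∈ rungs a b M g' ∧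
        (∀ t : ℕ, 0 < t → t < s' →
          j' + (t : ZMod b) ∉ rungs a b M (g'-1) ∧ j' + (t : ZMod b) ∉ rungs a b M g' ∧
          j' + (t : ZMod b) ∉ rungs a b M (g'+1)) := by
  intro s
  induction s using Nat.strong_induction_on with
  | _ s IH =>
    intro g j h0 hsb hjg hjs hbetg hbetp
    by_cases hT : ∃ t : ℕ, (0 < t ∧ t < s) ∧ j + (t : ZMod b) ∈ rungs a b M (g - ε)
    case neg =>
      push_neg at hT
      refine ⟨g, j, s, h0, hsb, hjg, hjs, ?_⟩
      intro t h0t hts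
      rcases hε with rfl | rfl
      · exact ⟨hT t ⟨h0t, hts⟩, hbetg t h0t hts, hbetp t h0t hts⟩
      · refine ⟨?_, hbetg t h0t hts, ?_⟩
        · have e1 : g - 1 = g + (-1) := by ring
          rw [e1]; exact hbetp t h0t hts
        · have e2 : g + 1 = g - (-1) := by ring
          rw [e2]; exact hT t ⟨h0t, hts⟩
    case pos =>
      classical
      obtain ⟨colP, hcolP⟩ : ∃ col, ∀ r : ZMod b,
          r ∈ colR a b M col ↔ (r ∈ rungs a b M (g - ε) ∨ r ∈ rungs a b M g) := by
        rcases hε with rfl | rfl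
        · exact ⟨g, fun r => Iff.rfl⟩
        · refine ⟨g + 1, fun r => ?_⟩
          have h1 : g + 1 - 1 = g := by ring
          have h2 : g - (-1) = g + 1 := by ring
          rw [h2, colR, h1]
          rw [Set.mem_union]
          tauto
      obtain ⟨colQ, hcolQ⟩ : ∃ col, ∀ r : ZMod b,
          r ∈ colR a b M col ↔ (r ∈ rungs a b M g ∨ r ∈ rungs a b M (g + ε)) := by
        rcases hε with rfl | rfl
        · refine ⟨g + 1, fun r => ?_⟩
          have h1 : g + 1 - 1 = g := by ring
          rw [colR, h1, Set.mem_union]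
        · refine ⟨g, fun r => ?_⟩
          have h1 : g + (-1) = g - 1 := by ring
          rw [h1, colR, Set.mem_union]
          tauto
      have hsodd : s % 2 = 1 := by
        refine dist_odd ha hb hM h0 (le_of_lt hsb) ((hcolQ j).mpr (Or.inl hjg))
          ((hcolQ _).mpr (Or.inl hjs)) ?_
        intro t h0t hts hmem
        rcases (hcolQ _).mp hmem with h | h
        · exact hbetg t h0t hts h
        · exact hbetp t h0t hts h
      set t₁ := Nat.find hT with ht₁def
      obtain ⟨⟨h0t₁, ht₁s⟩, ht₁mem⟩ := Nat.find_spec hT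
      have ht₁min : ∀ t : ℕ, 0 < t → t < t₁ → j + (t : ZMod b) ∉ rungs a b M (g - ε) := by
        intro t h0t htt hmem
        exact Nat.find_min hT htt ⟨⟨h0t, by omega⟩, hmem⟩
      by_cases hT2 : ∃ t : ℕ, (t₁ < t ∧ t < s) ∧ j + (t : ZMod b) ∈ rungs a b M (g - ε)
      case neg =>
        exfalso
        push_neg at hT2
        have ht₁odd : t₁ % 2 = 1 := by
          refine dist_odd ha hb hM h0t₁ (by omega) ((hcolP j).mpr (Or.inr hjg))
            ((hcolP _).mpr (Or.inl ht₁mem)) ?_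
          intro t h0t htt hmem
          rcases (hcolP _).mp hmem with h | h
          · exact ht₁min t h0t htt h
          · exact hbetg t h0t (by omega) h
        have hs₂odd : (s - t₁) % 2 = 1 := by
          have hcast : (((s - t₁ : ℕ)) : ZMod b) = (s : ZMod b) - (t₁ : ZMod b) :=
            Nat.cast_sub (le_of_lt ht₁s)
          have hmem' : (j + (t₁ : ZMod b)) + (((s - t₁ : ℕ)) : ZMod b) ∈ colR a b M colP := by
            rw [hcast]
            have : j + (t₁ : ZMod b) + ((s : ZMod b) - (t₁ : ZMod b)) = j + (s : ZMod b) := by ring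
            rw [this]
            exact (hcolP _).mpr (Or.inr hjs)
          refine dist_odd ha hb hM (by omega : 0 < s - t₁) (by omega)
            ((hcolP _).mpr (Or.inl ht₁mem)) hmem' ?_
          intro u h0u hus hmem
          have hcastu : j + (t₁ : ZMod b) + (u : ZMod b) = j + ((t₁ + u : ℕ) : ZMod b) := by
            push_cast; ring
          rw [hcastu] at hmem
          rcases (hcolP _).mp hmem with h | h
          · exact hT2 (t₁ + u) ⟨by omega, by omega⟩ h
          · exact hbetg (t₁ + u) (by omega) (by omega) h
        omega
      case pos =>
        set t₂ := Nat.find hT2 with ht₂def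
        obtain ⟨⟨ht₁t₂, ht₂s⟩, ht₂mem⟩ := Nat.find_spec hT2
        have ht₂min : ∀ t : ℕ, t₁ < t → t < t₂ → j + (t : ZMod b) ∉ rungs a b M (g - ε) := by
          intro t h1t htt hmem
          exact Nat.find_min hT2 htt ⟨⟨h1t, by omega⟩, hmem⟩
        have hgoal := IH (t₂ - t₁) (by omega) (g - ε) (j + (t₁ : ZMod b)) (by omega) (by omega)
          ht₁mem ?_ ?_ ?_
        · exact hgoal
        · have hcast : (((t₂ - t₁ : ℕ)) : ZMod b) = (t₂ : ZMod b) - (t₁ : ZMod b) :=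
            Nat.cast_sub (le_of_lt ht₁t₂)
          rw [hcast]
          have : j + (t₁ : ZMod b) + ((t₂ : ZMod b) - (t₁ : ZMod b)) = j + (t₂ : ZMod b) := by ring
          rw [this]
          exact ht₂mem
        · intro u h0u huu hmem
          have hcastu : j + (t₁ : ZMod b) + (u : ZMod b) = j + ((t₁ + u : ℕ) : ZMod b) := by
            push_cast; ring
          rw [hcastu] at hmem
          exact ht₂min (t₁ + u) (by omega) (by omega) hmem
        · intro u h0u huu hmem
          have hcastu : j + (t₁ : ZMod b) + (u : ZMod b) = j + ((t₁ + u : ℕ) : ZMod b) := by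
            push_cast; ring
          rw [hcastu] at hmem
          rw [sub_add_cancel] at hmem
          exact hbetg (t₁ + u) (by omega) (by omega) hmem

end Descent
section Slide

/-- the flip relation, generic in the torus dimensions -/
def FlipRel (a b : ℕ) (M M' : Set (Sym2 (ZMod a × ZMod b))) : Prop :=
  IsPM (torus a b) M ∧ IsPM (torus a b) M' ∧
    ∃ i j, symmDiff M M' = facialSquare a b i j

variable {a b : ℕ}

lemma mem_square_iff (i : ZMod a) (j : ZMod b) (e : Sym2 (ZMod a × ZMod b)) :
    e ∈ facialSquare a b i j ↔
      e = hedg a b i j ∨ e = vedg a b (i+1) j ∨ e = hedg a b i (j+1) ∨ e = vedg a b i j := by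
  rw [facialSquare]
  simp only [Set.mem_insert_iff, Set.mem_singleton_iff]
  exact Iff.rfl

lemma symmDiff_mem_of_nmem {X : Type*} {M S : Set X} {e : X} (h : e ∉ S) :
    e ∈ symmDiff M S ↔ e ∈ M := by
  rw [Set.mem_symmDiff]; tauto

lemma flipH_rel (ha : 3 ≤ a) (hb : 3 ≤ b) {M : Set (Sym2 (ZMod a × ZMod b))}
    (hM : IsPM (torus a b) M) {i : ZMod a} {j : ZMod b}
    (h1 : hedg a b i j ∈ M) (h2 : hedg a b i (j+1) ∈ M) :
    FlipRel a b M (symmDiff M (facialSquare a b i j)) :=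
  ⟨hM, flipH ha hb hM h1 h2, ⟨i, j, symmDiff_symmDiff_cancel_left M _⟩⟩

lemma flipV_rel (ha : 3 ≤ a) (hb : 3 ≤ b) {M : Set (Sym2 (ZMod a × ZMod b))}
    (hM : IsPM (torus a b) M) {i : ZMod a} {j : ZMod b}
    (h1 : vedg a b i j ∈ M) (h2 : vedg a b (i+1) j ∈ M) :
    FlipRel a b M (symmDiff M (facialSquare a b i j)) :=
  ⟨hM, flipV ha hb hM h1 h2, ⟨i, j, symmDiff_symmDiff_cancel_left M _⟩⟩

lemma HE_finite (ha : 3 ≤ a) (hb : 3 ≤ b) (M : Set (Sym2 (ZMod a × ZMod b))) :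
    (HE a b M).Finite := by
  haveI : NeZero a := ⟨by omega⟩
  haveI : NeZero b := ⟨by omega⟩
  exact Set.toFinite _

/-- sliding a rung along a clear corridor, ending with an annihilating flip:
the number of horizontal edges strictly decreases. -/
lemma slide (ha : 3 ≤ a) (hb : 3 ≤ b) :
    ∀ s : ℕ, s % 2 = 1 → s < b →
    ∀ M : Set (Sym2 (ZMod a × ZMod b)), IsPM (torus a b) M →
    ∀ (g : ZMod a) (j : ZMod b), hedg a b g j ∈ M → hedg a b g (j + (s : ZMod b)) ∈ M →
    (∀ t : ℕ, t % 2 = 1 → t < s →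
      vedg a b g (j + (t : ZMod b)) ∈ M ∧ vedg a b (g+1) (j + (t : ZMod b)) ∈ M) →
    ∃ M', Relation.ReflTransGen (FlipRel a b) M M' ∧ IsPM (torus a b) M' ∧
      (HE a b M').ncard < (HE a b M).ncard := by
  intro s
  induction s using Nat.strong_induction_on with
  | _ s IH =>
    intro hodd hsb M hM g j hj hjs hcorr
    have hcast1 : (j : ZMod b) + 1 = j + ((1:ℕ) : ZMod b) := by norm_num
    have hcast2 : (j : ZMod b) + 1 + 1 = j + ((2:ℕ) : ZMod b) := by push_cast; ring
    have Hne0 : ∀ t : ℕ, t < b → t ≠ 0 → j + (t : ZMod b) ≠ j := by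
      intro t htb ht0 h
      exact (zmod_add_ne hb j htb (by omega) ht0) (by rw [h, Nat.cast_zero, add_zero])
    have Hne1 : ∀ t : ℕ, t < b → t ≠ 1 → j + (t : ZMod b) ≠ j + 1 := by
      intro t htb ht1 h
      exact (zmod_add_ne hb j htb (by omega) ht1) (by rw [h, Nat.cast_one])
    have Hne2 : ∀ t : ℕ, t < b → t ≠ 2 → j + (t : ZMod b) ≠ j + 1 + 1 := by
      intro t htb ht2 h
      refine (zmod_add_ne hb j htb (by omega) ht2) ?_
      rw [h]
      push_cast
      ring
    rcases Nat.lt_or_ge s 2 with hs1 | hs3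
    · -- s = 1 : annihilating flip
      have hs : s = 1 := by omega
      subst hs
      have h2 : hedg a b g (j+1) ∈ M := by rw [hcast1]; exact hjs
      refine ⟨symmDiff M (facialSquare a b g j),
        Relation.ReflTransGen.single (flipH_rel ha hb hM hj h2), flipH ha hb hM hj h2, ?_⟩
      rw [HE_flipH ha hj h2]
      refine Set.ncard_lt_ncard ?_ (HE_finite ha hb M)
      constructor
      · exact Set.diff_subset
      · intro hsub
        have hmem : hedg a b g j ∈ HE a b M := ⟨hj, hedg_mem_Horiz g j⟩
        have := hsub hmem
        simp at this
    · -- s ≥ 3 : slide the bottom rung up two rows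
      have hs3' : 3 ≤ s := by omega
      obtain ⟨hv1, hv2⟩ := hcorr 1 (by omega) (by omega)
      rw [← hcast1] at hv1 hv2
      set S₁ := facialSquare a b g (j+1) with hS₁
      set M₁ := symmDiff M S₁ with hM₁def
      have hrel₁ : FlipRel a b M M₁ := flipV_rel ha hb hM hv1 hv2
      have hM₁ : IsPM (torus a b) M₁ := flipV ha hb hM hv1 hv2
      have hedg_j1_nM : hedg a b g (j+1) ∉ M := by
        intro hmem
        exact hedg_ne_vedg ha g g (j+1) (j+1)
          (pm_unique hM hmem hv1 (mem_hedg_left _ _) (mem_vedg_left _ _))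
      have hedg_j2_nM : hedg a b g (j+1+1) ∉ M := by
        intro hmem
        exact hedg_ne_vedg ha g g (j+1+1) (j+1)
          (pm_unique hM hmem hv1 (mem_hedg_left _ _) (mem_vedg_right _ _))
      set S₂ := facialSquare a b g j with hS₂
      have hedg_nmem : ∀ (i' : ZMod a) (t : ℕ), t < b → t ≠ 0 → t ≠ 1 → t ≠ 2 →
          hedg a b i' (j + (t : ZMod b)) ∉ S₁ ∧ hedg a b i' (j + (t : ZMod b)) ∉ S₂ := by
        intro i' t htb ht0 ht1 ht2
        constructor
        · rw [hS₁, mem_square_iff]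
          push_neg
          refine ⟨?_, hedg_ne_vedg ha _ _ _ _, ?_, hedg_ne_vedg ha _ _ _ _⟩
          · intro h
            exact Hne1 t htb ht1 (hedg_eq_iff ha h).2
          · intro h
            exact Hne2 t htb ht2 (hedg_eq_iff ha h).2
        · rw [hS₂, mem_square_iff]
          push_neg
          refine ⟨?_, hedg_ne_vedg ha _ _ _ _, ?_, hedg_ne_vedg ha _ _ _ _⟩
          · intro h
            exact Hne0 t htb ht0 (hedg_eq_iff ha h).2
          · intro h
            exact Hne1 t htb ht1 (hedg_eq_iff ha h).2
      have vedg_nmem : ∀ (i' : ZMod a) (t : ℕ), t < b → t ≠ 0 → t ≠ 1 →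
          vedg a b i' (j + (t : ZMod b)) ∉ S₁ ∧ vedg a b i' (j + (t : ZMod b)) ∉ S₂ := by
        intro i' t htb ht0 ht1
        constructor
        · rw [hS₁, mem_square_iff]
          push_neg
          refine ⟨fun h => hedg_ne_vedg ha _ _ _ _ h.symm, ?_,
            fun h => hedg_ne_vedg ha _ _ _ _ h.symm, ?_⟩
          · intro h
            exact Hne1 t htb ht1 (vedg_eq_iff hb h).2
          · intro h
            exact Hne1 t htb ht1 (vedg_eq_iff hb h).2
        · rw [hS₂, mem_square_iff]
          push_neg
          refine ⟨fun h => hedg_ne_vedg ha _ _ _ _ h.symm, ?_,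
            fun h => hedg_ne_vedg ha _ _ _ _ h.symm, ?_⟩
          · intro h
            exact Hne0 t htb ht0 (vedg_eq_iff hb h).2
          · intro h
            exact Hne0 t htb ht0 (vedg_eq_iff hb h).2
      -- membership in M₁
      have hedg_j_M₁ : hedg a b g j ∈ M₁ := by
        rw [hM₁def, symmDiff_mem_of_nmem ?_]
        · exact hj
        · rw [hS₁, mem_square_iff]
          push_neg
          refine ⟨?_, hedg_ne_vedg ha _ _ _ _, ?_, hedg_ne_vedg ha _ _ _ _⟩
          · intro h
            exact zmod_succ_ne hb j ((hedg_eq_iff ha h).2).symm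
          · intro h
            have h2 := (hedg_eq_iff ha h).2
            exact zmod_two_add_ne hb j (by linear_combination - h2)
      have hedg_j1_M₁ : hedg a b g (j+1) ∈ M₁ := by
        rw [hM₁def, Set.mem_symmDiff]
        right
        refine ⟨?_, hedg_j1_nM⟩
        rw [hS₁, mem_square_iff]
        left
        rfl
      -- second flip
      set M₂ := symmDiff M₁ S₂ with hM₂def
      have hrel₂ : FlipRel a b M₁ M₂ := flipH_rel ha hb hM₁ hedg_j_M₁ hedg_j1_M₁
      have hM₂ : IsPM (torus a b) M₂ := flipH ha hb hM₁ hedg_j_M₁ hedg_j1_M₁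
      -- new bottom rung at row j+2 in M₂
      have hedg_j2_M₂ : hedg a b g (j + ((2:ℕ) : ZMod b)) ∈ M₂ := by
        have hin_S₁ : hedg a b g (j + ((2:ℕ) : ZMod b)) ∈ S₁ := by
          rw [hS₁, mem_square_iff]
          right; right; left
          rw [← hcast2]
        have hn_M : hedg a b g (j + ((2:ℕ) : ZMod b)) ∉ M := by
          rw [← hcast2]
          exact hedg_j2_nM
        have h1 : hedg a b g (j + ((2:ℕ) : ZMod b)) ∈ M₁ := by
          rw [hM₁def, Set.mem_symmDiff]
          right
          exact ⟨hin_S₁, hn_M⟩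
        rw [hM₂def, symmDiff_mem_of_nmem ?_]
        · exact h1
        · rw [hS₂, mem_square_iff]
          push_neg
          refine ⟨?_, hedg_ne_vedg ha _ _ _ _, ?_, hedg_ne_vedg ha _ _ _ _⟩
          · intro h
            exact Hne0 2 (by omega) (by omega) (hedg_eq_iff ha h).2
          · intro h
            exact Hne1 2 (by omega) (by omega) (hedg_eq_iff ha h).2
      -- old top rung survives into M₂
      have hedg_js_M₂ : hedg a b g (j + (s : ZMod b)) ∈ M₂ := by
        obtain ⟨hn1, hn2⟩ := hedg_nmem g s hsb (by omega) (by omega) (by omega)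
        rw [hM₂def, symmDiff_mem_of_nmem hn2, hM₁def, symmDiff_mem_of_nmem hn1]
        exact hjs
      -- corridor in M₂
      have hcorr₂ : ∀ t : ℕ, t % 2 = 1 → t < s - 2 →
          vedg a b g ((j + ((2:ℕ) : ZMod b)) + (t : ZMod b)) ∈ M₂ ∧
          vedg a b (g+1) ((j + ((2:ℕ) : ZMod b)) + (t : ZMod b)) ∈ M₂ := by
        intro t ht hts
        have hre : (j + ((2:ℕ) : ZMod b)) + (t : ZMod b) = j + ((t+2 : ℕ) : ZMod b) := by
          push_cast
          ring
        rw [hre]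
        obtain ⟨hc1, hc2⟩ := hcorr (t+2) (by omega) (by omega)
        obtain ⟨hn1, hn2⟩ := vedg_nmem g (t+2) (by omega) (by omega) (by omega)
        obtain ⟨hn1', hn2'⟩ := vedg_nmem (g+1) (t+2) (by omega) (by omega) (by omega)
        constructor
        · rw [hM₂def, symmDiff_mem_of_nmem hn2, hM₁def, symmDiff_mem_of_nmem hn1]
          exact hc1
        · rw [hM₂def, symmDiff_mem_of_nmem hn2', hM₁def, symmDiff_mem_of_nmem hn1']
          exact hc2
      -- cardinality control
      have hHE₁ : HE a b M₁ = HE a b M ∪ {hedg a b g (j+1), hedg a b g (j+1+1)} :=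
        HE_flipV ha hv1 hv2 hedg_j1_nM hedg_j2_nM
      have hHE₂ : HE a b M₂ = HE a b M₁ \ {hedg a b g j, hedg a b g (j+1)} :=
        HE_flipH ha hedg_j_M₁ hedg_j1_M₁
      have hsub : HE a b M₂ ⊆ insert (hedg a b g (j+1+1)) (HE a b M \ {hedg a b g j}) := by
        rw [hHE₂, hHE₁]
        intro e he
        simp only [Set.mem_diff, Set.mem_union, Set.mem_insert_iff,
          Set.mem_singleton_iff] at he ⊢
        rcases he with ⟨he1 | he1, he2⟩
        · right
          exact ⟨he1, by tauto⟩
        · rcases he1 with rfl | rfl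
          · exact absurd (by tauto) he2
          · left
            rfl
      have hjHE : hedg a b g j ∈ HE a b M := ⟨hj, hedg_mem_Horiz g j⟩
      have hfinM : (HE a b M).Finite := HE_finite ha hb M
      have hcard₂ : (HE a b M₂).ncard ≤ (HE a b M).ncard := by
        have h1 := Set.ncard_le_ncard hsub
          (Set.Finite.insert _ (Set.Finite.diff hfinM))
        have h2 : (insert (hedg a b g (j+1+1)) (HE a b M \ {hedg a b g j})).ncard ≤
            (HE a b M \ {hedg a b g j}).ncard + 1 := Set.ncard_insert_le _ _
        have h3 : (HE a b M \ {hedg a b g j}).ncard = (HE a b M).ncard - 1 :=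
          Set.ncard_diff_singleton_of_mem hjHE
        have h4 : 1 ≤ (HE a b M).ncard := by
          rw [Nat.one_le_iff_ne_zero]
          intro h0
          rw [Set.ncard_eq_zero hfinM] at h0
          rw [h0] at hjHE
          exact hjHE
        omega
      -- recurse
      have hstep : (j + ((2:ℕ) : ZMod b)) + ((s - 2 : ℕ) : ZMod b) = j + (s : ZMod b) := by
        push_cast [Nat.cast_sub (by omega : 2 ≤ s)]
        ring
      obtain ⟨M', hreach, hM', hcard'⟩ := IH (s - 2) (by omega) (by omega) (by omega)
        M₂ hM₂ g (j + ((2:ℕ) : ZMod b)) hedg_j2_M₂ (by rw [hstep]; exact hedg_js_M₂) hcorr₂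
      exact ⟨M', Relation.ReflTransGen.head hrel₁ (Relation.ReflTransGen.head hrel₂ hreach),
        hM', by omega⟩

end Slide
section Main

variable {a b : ℕ}

lemma main_aux (ha : 3 ≤ a) (hb : 3 ≤ b) (hbodd : Odd b) :
    ∀ k : ℕ, ∀ M : Set (Sym2 (ZMod a × ZMod b)), IsPM (torus a b) M →
      (HE a b M).ncard ≤ k →
      ∃ M', Relation.ReflTransGen (FlipRel a b) M M' ∧
        ∃ i, rungs a b M' i = ∅ := by
  intro k
  induction k using Nat.strong_induction_on with
  | _ k IH =>
    intro M hM hcard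
    by_cases hgap : ∃ i, rungs a b M i = ∅
    · exact ⟨M, Relation.ReflTransGen.refl, hgap⟩
    · push_neg at hgap
      have hne : ∀ g, (rungs a b M g).Nonempty := hgap
      obtain ⟨g, j, s, h0, hsb, hjg, hjs, hbetg, hside⟩ := pair_exists ha hb hbodd hM hne
      have hclear : ∃ (g' : ZMod a) (j' : ZMod b) (s' : ℕ), 0 < s' ∧ s' < b ∧
          j' ∈ rungs a b M g' ∧ j' + (s' : ZMod b) ∈ rungs a b M g' ∧
          (∀ t : ℕ, 0 < t → t < s' →
            j' + (t : ZMod b) ∉ rungs a b M (g'-1) ∧ j' + (t : ZMod b) ∉ rungs a b M g' ∧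
            j' + (t : ZMod b) ∉ rungs a b M (g'+1)) := by
        rcases hside with hL | hR
        · refine descent ha hb hM (-1) (Or.inr rfl) s g j h0 hsb hjg hjs hbetg ?_
          intro t h0t hts
          rw [show g + (-1) = g - 1 by ring]
          exact hL t h0t hts
        · exact descent ha hb hM 1 (Or.inl rfl) s g j h0 hsb hjg hjs hbetg hR
      obtain ⟨g', j', s', h0', hs'b, hj', hjs', hint⟩ := hclear
      have hcolm : ∀ r : ZMod b, r ∈ colR a b M (g'+1) ↔
          (r ∈ rungs a b M g' ∨ r ∈ rungs a b M (g'+1)) := by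
        intro r
        rw [colR, show g' + 1 - 1 = g' by ring, Set.mem_union]
      have hbetm : ∀ t : ℕ, 0 < t → t < s' → j' + (t : ZMod b) ∉ colR a b M (g'+1) := by
        intro t h0t hts hmem
        rcases (hcolm _).mp hmem with h | h
        · exact (hint t h0t hts).2.1 h
        · exact (hint t h0t hts).2.2 h
      have hs'odd : s' % 2 = 1 :=
        dist_odd ha hb hM h0' (le_of_lt hs'b) ((hcolm j').mpr (Or.inl hj'))
          ((hcolm _).mpr (Or.inl hjs')) hbetm
      have hbet_col : ∀ t : ℕ, 0 < t → t < s' → j' + (t : ZMod b) ∉ colR a b M g' := by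
        intro t h0t hts hmem
        rcases hmem with h | h
        · exact (hint t h0t hts).1 h
        · exact (hint t h0t hts).2.1 h
      have hcorr1 := corridor ha hb hM (le_of_lt hs'b)
        (Or.inr hj' : j' ∈ colR a b M g') hbet_col
      have hcorr2 := corridor ha hb hM (le_of_lt hs'b)
        ((hcolm j').mpr (Or.inl hj')) hbetm
      obtain ⟨M'', hreach, hM'', hlt⟩ := slide ha hb s' hs'odd hs'b M hM g' j'
        (show hedg a b g' j' ∈ M from hj')
        (show hedg a b g' (j' + (s' : ZMod b)) ∈ M from hjs')
        (fun t ht hts => ⟨hcorr1 t ht hts, hcorr2 t ht hts⟩)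
      obtain ⟨M', hreach', hgap'⟩ := IH ((HE a b M'').ncard) (by omega) M'' hM'' (le_refl _)
      exact ⟨M', hreach.trans hreach', hgap'⟩

end Main
/-- every perfect matching of the torus can be transformed by flips into a
perfect matching avoiding all horizontal edges between some pair of consecutive columns. -/
theorem stmt_12 (n m : ℕ) (hn : 1 ≤ n) (hm : 2 ≤ m)
    (M : Set (Sym2 (ZMod (2*m) × ZMod (2*n+1)))) (hM : IsPM (torus (2*m) (2*n+1)) M) :
    ∃ M' : Set (Sym2 (ZMod (2*m) × ZMod (2*n+1))),
      Relation.ReflTransGen (TorusFlip m n) M M' ∧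
      ∃ i : ZMod (2*m), M' ∩ colEdges (2*m) (2*n+1) i = ∅ := by
  have ha : 3 ≤ 2*m := by omega
  have hb3 : 3 ≤ 2*n+1 := by omega
  have hbodd : Odd (2*n+1) := ⟨n, by ring⟩
  obtain ⟨M', hreach, ⟨i, hi⟩⟩ :=
    main_aux ha hb3 hbodd ((HE (2*m) (2*n+1) M).ncard) M hM (le_refl _)
  refine ⟨M', hreach, i, ?_⟩
  ext e
  simp only [Set.mem_inter_iff, Set.mem_empty_iff_false, iff_false, not_and]
  intro heM' hecol
  obtain ⟨jj, rfl⟩ := hecol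
  have hmem : jj ∈ rungs (2*m) (2*n+1) M' i := heM'
  rw [hi] at hmem
  exact hmem
end

section
/- Let G be a finite graph with perfect matchings and F a family of even cycles of G such that: (i) any two perfect matchings of G are connected in the resonance graph R(G;F), and (ii) every cycle in F has length 4. Then the forcing spectrum of G, Spec(G) = {f(G,M) : M a perfect matching of G}, is an interval of integers. -/
open SimpleGraph

variable {V : Type*}

/-- every `Sym2` has a member -/
lemma sym2_exists_mem (e : Sym2 V) : ∃ v, v ∈ e := by
  induction e using Sym2.inductionOn with
  | hf x y => exact ⟨x, Sym2.mem_mk_left x y⟩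

/-- A perfect matching is a forcing set of itself. -/
lemma pm_forcing_self {G : SimpleGraph V} {M : Set (Sym2 V)} (hM : IsPM G M) :
    IsForcingSet G M M := by
  refine ⟨subset_rfl, fun M' hM' hsub => ?_⟩
  apply Set.Subset.antisymm _ hsub
  intro e he
  obtain ⟨v, hv⟩ := sym2_exists_mem e
  obtain ⟨f, ⟨hfM, hvf⟩, _⟩ := hM.2 v
  obtain ⟨g, _, hu⟩ := hM'.2 v
  have h1 : e = g := hu e ⟨he, hv⟩
  have h2 : f = g := hu f ⟨hsub hfM, hvf⟩
  rw [h1, ← h2]; exact hfM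

/-- Key step: flipping along a 4-cycle raises the forcing number by at most 1. -/
lemma forcing_step [Fintype V] {G : SimpleGraph V} {A B C : Set (Sym2 V)}
    (hA : IsPM G A) (hB : IsPM G B) (hC4 : C.ncard = 4) (hCE : C ⊆ G.edgeSet)
    (hD : symmDiff A B = C) :
    forcingNumber G B ≤ forcingNumber G A + 1 := by
  classical
  set P : Set (Sym2 V) := A \ B with hPdef
  set Q : Set (Sym2 V) := B \ A with hQdef
  have hC : C = P ∪ Q := by
    rw [← hD, Set.symmDiff_def]
  have hPC : P ⊆ C := hC ▸ Set.subset_union_left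
  have hQC : Q ⊆ C := hC ▸ Set.subset_union_right
  have hPQdisj : Disjoint P Q := by
    rw [Set.disjoint_left]; rintro e ⟨heA, heB⟩ ⟨heB', heA'⟩; exact heB heB'
  -- every vertex of `C` lies on an edge of `P` and on an edge of `Q`
  have cover : ∀ v ∈ edgeVerts C, (∃ e ∈ P, v ∈ e) ∧ (∃ e ∈ Q, v ∈ e) := by
    rintro v ⟨f, hfC, hvf⟩
    obtain ⟨eA, ⟨heA, hveA⟩, huA⟩ := hA.2 v
    obtain ⟨eB, ⟨heB, hveB⟩, huB⟩ := hB.2 v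
    have hne : eA ≠ eB := by
      rw [hC] at hfC
      rcases hfC with ⟨hfA, hfB⟩ | ⟨hfB, hfA⟩
      · have hfe : f = eA := huA f ⟨hfA, hvf⟩
        intro h; apply hfB; rw [hfe, h]; exact heB
      · have hfe : f = eB := huB f ⟨hfB, hvf⟩
        intro h; apply hfA; rw [hfe, ← h]; exact heA
    refine ⟨⟨eA, ⟨heA, ?_⟩, hveA⟩, ⟨eB, ⟨heB, ?_⟩, hveB⟩⟩
    · intro hAB; exact hne (huB eA ⟨hAB, hveA⟩)
    · intro hBA; exact hne ((huA eB ⟨hBA, hveB⟩).symm)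
  -- each of P and Q has at least two edges, hence exactly two
  have hcards : P.ncard + Q.ncard = 4 := by
    rw [← Set.ncard_union_eq hPQdisj P.toFinite Q.toFinite, ← hC, hC4]
  have hCne : C.Nonempty := by
    rw [← Set.ncard_pos C.toFinite, hC4]; norm_num
  have htwo : ∀ X Y : Set (Sym2 V), X ∪ Y = C → Disjoint X Y →
      (∀ v ∈ edgeVerts C, ∃ e ∈ X, v ∈ e) → Y.Nonempty → 2 ≤ X.ncard := by
    intro X Y hXY hdisj hcov ⟨q, hq⟩
    by_contra h
    push_neg at h
    interval_cases hX : X.ncard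
    · rw [Set.ncard_eq_zero X.toFinite] at hX
      obtain ⟨v, hv⟩ := sym2_exists_mem q
      obtain ⟨e, he, _⟩ := hcov v ⟨q, hXY ▸ Or.inr hq, hv⟩
      rw [hX] at he; exact he
    · obtain ⟨p, hp⟩ := Set.ncard_eq_one.1 hX
      have hqC : q ∈ C := hXY ▸ Or.inr hq
      have hqnd : ¬ q.IsDiag := G.not_isDiag_of_mem_edgeSet (hCE hqC)
      obtain ⟨a, b, rfl⟩ : ∃ x y, q = s(x, y) := by
        induction q using Sym2.inductionOn with
        | hf x y => exact ⟨x, y, rfl⟩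
      have hab : a ≠ b := by simpa [Sym2.mk_isDiag_iff] using hqnd
      have hap : a ∈ p := by
        obtain ⟨e, he, hae⟩ := hcov a ⟨_, hqC, Sym2.mem_mk_left a b⟩
        rw [hp, Set.mem_singleton_iff] at he; exact he ▸ hae
      have hbp : b ∈ p := by
        obtain ⟨e, he, hbe⟩ := hcov b ⟨_, hqC, Sym2.mem_mk_right a b⟩
        rw [hp, Set.mem_singleton_iff] at he; exact he ▸ hbe
      obtain ⟨x, y, rfl⟩ : ∃ x y, p = s(x, y) := by
        induction p using Sym2.inductionOn with
        | hf x y => exact ⟨x, y, rfl⟩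
      have : s(a, b) = s(x, y) := by
        rcases Sym2.mem_iff.1 hap with rfl | rfl <;>
          rcases Sym2.mem_iff.1 hbp with rfl | rfl
        · exact absurd rfl hab
        · rfl
        · exact Sym2.eq_swap
        · exact absurd rfl hab
      have hpX : s(x, y) ∈ X := hp ▸ rfl
      exact Set.disjoint_left.1 hdisj (this ▸ hpX) hq
  have hQP : Q.Nonempty ∧ P.Nonempty := by
    obtain ⟨e, heC⟩ := hCne
    obtain ⟨v, hv⟩ := sym2_exists_mem e
    obtain ⟨⟨eP, hP, _⟩, ⟨eQ, hQ, _⟩⟩ := cover v ⟨e, heC, hv⟩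
    exact ⟨⟨eQ, hQ⟩, ⟨eP, hP⟩⟩
  have hP2 : 2 ≤ P.ncard :=
    htwo P Q hC.symm hPQdisj (fun v hv => (cover v hv).1) hQP.1
  have hQ2 : Q.ncard ≤ 2 := by omega
  -- take a minimum forcing set for A
  obtain ⟨S, hSf, hScard⟩ :
      ∃ S, IsForcingSet G A S ∧ S.ncard = forcingNumber G A :=
    Nat.sInf_mem (⟨A.ncard, A, pm_forcing_self hA, rfl⟩ :
      {n | ∃ S, IsForcingSet G A S ∧ S.ncard = n}.Nonempty)
  have hSA : S ⊆ A := hSf.1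
  have hSP : (S ∩ P).Nonempty := by
    rw [Set.nonempty_iff_ne_empty]
    intro h
    have hSB : S ⊆ B := by
      intro e he
      by_contra heB
      have : e ∈ S ∩ P := ⟨he, hSA he, heB⟩
      rw [h] at this; exact this
    have : B = A := hSf.2 B hB hSB
    rw [this, symmDiff_self] at hD
    have : C.ncard = 0 := by rw [← hD]; simp [Set.ncard_empty]
    omega
  -- the new forcing set for B
  set S' : Set (Sym2 V) := (S \ P) ∪ Q with hS'def
  have hS'B : S' ⊆ B := by
    rintro e (⟨heS, heP⟩ | heQ)
    · by_contra h; exact heP ⟨hSA heS, h⟩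
    · exact heQ.1
  have hforce : IsForcingSet G B S' := by
    refine ⟨hS'B, fun M' hM' hsub => ?_⟩
    have hQM' : Q ⊆ M' := fun e he => hsub (Or.inr he)
    have hPM' : ∀ e ∈ P, e ∉ M' := by
      intro e heP heM'
      obtain ⟨v, hv⟩ := sym2_exists_mem e
      obtain ⟨_, eQ, heQ, hveQ⟩ := cover v ⟨e, hPC heP, hv⟩
      obtain ⟨g, _, hu⟩ := hM'.2 v
      have h1 : e = g := hu e ⟨heM', hv⟩
      have h2 : eQ = g := hu eQ ⟨hQM' heQ, hveQ⟩
      exact Set.disjoint_left.1 hPQdisj heP (h1 ▸ h2 ▸ heQ)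
    set M'' : Set (Sym2 V) := symmDiff M' C with hM''def
    have hmem'' : ∀ e, e ∈ M'' ↔ (e ∈ M' ∧ e ∉ C) ∨ (e ∈ C ∧ e ∉ M') := by
      intro e; exact Set.mem_symmDiff
    have hM''pm : IsPM G M'' := by
      constructor
      · intro e he
        rcases (hmem'' e).1 he with ⟨h, _⟩ | ⟨h, _⟩
        · exact hM'.1 h
        · exact hCE h
      · intro v
        by_cases hv : v ∈ edgeVerts C
        · obtain ⟨⟨eP, hePP, hveP⟩, ⟨eQ, heQQ, hveQ⟩⟩ := cover v hv
          refine ⟨eP, ⟨(hmem'' eP).2 (Or.inr ⟨hPC hePP, hPM' eP hePP⟩), hveP⟩, ?_⟩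
          rintro f ⟨hf, hvf⟩
          rcases (hmem'' f).1 hf with ⟨hfM', hfC⟩ | ⟨hfC, hfM'⟩
          · obtain ⟨g, _, hu⟩ := hM'.2 v
            have h1 : f = g := hu f ⟨hfM', hvf⟩
            have h2 : eQ = g := hu eQ ⟨hQM' heQQ, hveQ⟩
            exact absurd (h1 ▸ h2 ▸ hQC heQQ) hfC
          · rw [hC] at hfC
            rcases hfC with hfP | hfQ
            · obtain ⟨g, _, hu⟩ := hA.2 v
              have h1 : f = g := hu f ⟨hfP.1, hvf⟩
              have h2 : eP = g := hu eP ⟨hePP.1, hveP⟩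
              rw [h1, h2]
            · exact absurd (hQM' hfQ) hfM'
        · obtain ⟨e, ⟨heM', hve⟩, hu⟩ := hM'.2 v
          have heC : e ∉ C := fun h => hv ⟨e, h, hve⟩
          refine ⟨e, ⟨(hmem'' e).2 (Or.inl ⟨heM', heC⟩), hve⟩, ?_⟩
          rintro f ⟨hf, hvf⟩
          rcases (hmem'' f).1 hf with ⟨hfM', _⟩ | ⟨hfC, _⟩
          · exact hu f ⟨hfM', hvf⟩
          · exact absurd ⟨f, hfC, hvf⟩ hv
    have hSM'' : S ⊆ M'' := by
      intro e he
      by_cases heP : e ∈ P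
      · exact (hmem'' e).2 (Or.inr ⟨hPC heP, hPM' e heP⟩)
      · have heM' : e ∈ M' := hsub (Or.inl ⟨he, heP⟩)
        have heC : e ∉ C := by
          rw [hC]
          rintro (h | h)
          · exact heP h
          · exact h.2 (hSA he)
        exact (hmem'' e).2 (Or.inl ⟨heM', heC⟩)
    have hM''A : M'' = A := hSf.2 M'' hM''pm hSM''
    have : symmDiff M'' C = M' := by
      rw [hM''def, symmDiff_symmDiff_cancel_right]
    rw [← this, hM''A, ← hD, symmDiff_symmDiff_cancel_left]
  -- cardinality bound
  have hcard : S'.ncard ≤ forcingNumber G A + 1 := by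
    have h1 : S'.ncard ≤ (S \ P).ncard + Q.ncard := Set.ncard_union_le _ _
    have h2 : S \ P = S \ (S ∩ P) := by
      ext e; constructor
      · rintro ⟨h1, h2⟩; exact ⟨h1, fun h => h2 h.2⟩
      · rintro ⟨h1, h2⟩; exact ⟨h1, fun h => h2 ⟨h1, h⟩⟩
    have h3 : (S \ (S ∩ P)).ncard = S.ncard - (S ∩ P).ncard :=
      Set.ncard_diff Set.inter_subset_left (S ∩ P).toFinite
    have h4 : 1 ≤ (S ∩ P).ncard := (Set.ncard_pos (S ∩ P).toFinite).2 hSP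
    have h5 : (S ∩ P).ncard ≤ S.ncard :=
      Set.ncard_le_ncard Set.inter_subset_left S.toFinite
    rw [h2, h3] at h1
    omega
  calc forcingNumber G B ≤ S'.ncard := Nat.sInf_le ⟨S', hforce, rfl⟩
    _ ≤ forcingNumber G A + 1 := hcard

/-- if any two perfect matchings of `G` are connected in the resonance graph
`R(G;F)` and every cycle of `F` has length 4, then the forcing spectrum of `G` is an
integer interval. -/
theorem stmt_16 {V : Type*} [Fintype V] (G : SimpleGraph V) (F : Set (Set (Sym2 V)))
    (hFcyc : ∀ C ∈ F, IsCycleSet G C ∧ C.ncard = 4)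
    (hconn : ∀ M M' : Set (Sym2 V), IsPM G M → IsPM G M' →
      Relation.ReflTransGen
        (fun A B => IsPM G A ∧ IsPM G B ∧ ∃ C ∈ F, symmDiff A B = C) M M') :
    ∀ a b c : ℕ, a ∈ {k : ℕ | ∃ M, IsPM G M ∧ forcingNumber G M = k} →
      c ∈ {k : ℕ | ∃ M, IsPM G M ∧ forcingNumber G M = k} →
      a ≤ b → b ≤ c → b ∈ {k : ℕ | ∃ M, IsPM G M ∧ forcingNumber G M = k} := by
  set r : Set (Sym2 V) → Set (Sym2 V) → Prop :=
    fun A B => IsPM G A ∧ IsPM G B ∧ ∃ C ∈ F, symmDiff A B = C with hr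
  have hstep : ∀ X Y, r X Y → forcingNumber G Y ≤ forcingNumber G X + 1 := by
    rintro X Y ⟨hX, hY, C, hCF, hXY⟩
    exact forcing_step hX hY (hFcyc C hCF).2 (hFcyc C hCF).1.1 hXY
  rintro a b c ⟨M, hM, ha⟩ ⟨M', hM', hc⟩ hab hbc
  have key : ∀ X Y : Set (Sym2 V), Relation.ReflTransGen r X Y → IsPM G X →
      forcingNumber G X ≤ b → b ≤ forcingNumber G Y →
      ∃ N, IsPM G N ∧ forcingNumber G N = b := by
    intro X Y h
    induction h with
    | refl => exact fun hX h1 h2 => ⟨X, hX, le_antisymm h1 h2⟩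
    | @tail Y Z hXY hYZ ih =>
      intro hX h1 h2
      by_cases hb : b ≤ forcingNumber G Y
      · exact ih hX h1 hb
      · push_neg at hb
        have h3 := hstep Y Z hYZ
        exact ⟨Z, hYZ.2.1, le_antisymm (by omega) h2⟩
  exact key M M' (hconn M M' hM hM') hM (ha ▸ hab) (hc ▸ hbc)
end
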